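/- Let p be a prime, r a positive integer, and q = p^r. Then a Sylow p-subgroup of PSL(2, F_q) is isomorphic to the elementary abelian group (C_p)^r. -/

import Mathlib

open Matrix

section Aux

variable {F : Type*} [Field F] [Fintype F]

/-- the unipotent one-parameter subgroup hom into `SL(2,F)` -/
def uniHom : Multiplicative F →* Matrix.SpecialLinearGroup (Fin 2) F where
  toFun t := ⟨!![1, t.toAdd; 0, 1], by simp [Matrix.det_fin_two_of]⟩
  map_one' := by ext i j; fin_cases i <;> fin_cases j <;> simp
  map_mul' s t := by
    ext i j
    erw [Matrix.SpecialLinearGroup.coe_mul]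
    fin_cases i <;> fin_cases j <;>
      simp [Matrix.SpecialLinearGroup.coe_mul, Matrix.mul_fin_two, toAdd_mul, add_comm]

omit [Fintype F] in
lemma uniHom_inj :
    Function.Injective ((QuotientGroup.mk'
      (Subgroup.center (Matrix.SpecialLinearGroup (Fin 2) F))).comp (uniHom (F := F))) := by
  rw [← MonoidHom.ker_eq_bot_iff, eq_bot_iff]
  intro t ht
  simp only [MonoidHom.mem_ker, MonoidHom.comp_apply, QuotientGroup.mk'_apply,
    QuotientGroup.eq_one_iff] at ht
  obtain ⟨c, hc, hc'⟩ := Matrix.SpecialLinearGroup.mem_center_iff.mp ht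
  have h01 := congrFun (congrFun hc' 0) 1
  simp [uniHom, Matrix.scalar_apply] at h01
  simp only [Subgroup.mem_bot]
  exact Multiplicative.toAdd.injective (h01.symm : t.toAdd = (0 : F))

lemma sl_injective_toGL :
    Function.Injective (Matrix.SpecialLinearGroup.toGL (n := Fin 2) (R := F)) :=
  fun A B h => Subtype.ext (congrArg Units.val h)

end Aux

/-- a Sylow `p`-subgroup of `PSL(2, F_q)`, `q = p^r`, is isomorphic to
the elementary abelian group `(C_p)^r`. -/
theorem stmt10 (p r : ℕ) (hp : p.Prime) (hr : 0 < r)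
    (F : Type*) [Field F] [Fintype F] (hF : Fintype.card F = p ^ r)
    (P : Sylow p (Matrix.SpecialLinearGroup (Fin 2) F ⧸
      Subgroup.center (Matrix.SpecialLinearGroup (Fin 2) F))) :
    Nonempty (P.toSubgroup ≃* (Fin r → Multiplicative (ZMod p))) := by
  haveI : Fact p.Prime := ⟨hp⟩
  set G := Matrix.SpecialLinearGroup (Fin 2) F
  set PSL := G ⧸ Subgroup.center G
  haveI : Finite G := Subtype.finite
  haveI : Finite PSL := Quotient.finite _
  set φ : Multiplicative F →* PSL :=
    (QuotientGroup.mk' (Subgroup.center G)).comp (uniHom (F := F)) with hφ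
  have hinj : Function.Injective φ := uniHom_inj
  set U : Subgroup PSL := φ.range with hU
  have e0 : Multiplicative F ≃* U := MonoidHom.ofInjective hinj
  set q := p ^ r with hqdef
  have cardU : Nat.card U = q := by
    rw [← Nat.card_congr e0.toEquiv, Nat.card_congr (Multiplicative.toAdd (α := F)),
      Nat.card_eq_fintype_card, hF]
  have hq2 : 2 ≤ q := le_trans hp.two_le (Nat.le_self_pow hr.ne' p)
  have cardGL : Nat.card (GL (Fin 2) F) = (q ^ 2 - 1) * (q ^ 2 - q) := by
    rw [Matrix.card_GL_field, hF]
    simp [Fin.prod_univ_two]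
  have hSLGL : Nat.card G ∣ Nat.card (GL (Fin 2) F) := by
    calc Nat.card G = Nat.card ((Matrix.SpecialLinearGroup.toGL (n := Fin 2) (R := F)).range) :=
          Nat.card_congr (Equiv.ofInjective _ sl_injective_toGL)
      _ ∣ Nat.card (GL (Fin 2) F) := Subgroup.card_subgroup_dvd_card _
  have hPSLSL : Nat.card PSL ∣ Nat.card G := Subgroup.card_quotient_dvd_card _
  have hUdvd : q ∣ Nat.card PSL := cardU ▸ Subgroup.card_subgroup_dvd_card U
  have hpq : p ∣ q := dvd_pow_self p hr.ne'
  -- p-adic valuation of |GL|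
  have hpq1 : ¬ p ∣ (q - 1) := by
    intro h
    have h2 := Nat.dvd_sub hpq h
    rw [show q - (q - 1) = 1 by omega] at h2
    exact hp.one_lt.ne' (Nat.dvd_one.mp h2)
  have hpq2 : ¬ p ∣ (q + 1) := by
    intro h
    have h2 := Nat.dvd_sub h hpq
    rw [show q + 1 - q = 1 by omega] at h2
    exact hp.one_lt.ne' (Nat.dvd_one.mp h2)
  have hGLval : ¬ p ^ (r + 1) ∣ Nat.card (GL (Fin 2) F) := by
    rw [cardGL, show (q ^ 2 - 1) * (q ^ 2 - q) = q * ((q - 1) * ((q + 1) * (q - 1))) by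
      have h1 : 1 ≤ q := by omega
      have h2 : q ≤ q ^ 2 := Nat.le_self_pow two_ne_zero q
      have h3 : 1 ≤ q ^ 2 := le_trans h1 h2
      zify [h1, h2, h3]; ring]
    intro h
    rw [pow_succ, hqdef] at h
    have hq0 : 0 < p ^ r := Nat.pow_pos hp.pos
    have hm : p ∣ (q - 1) * ((q + 1) * (q - 1)) :=
      (Nat.mul_dvd_mul_iff_left hq0).mp (hqdef ▸ h)
    rcases hp.dvd_mul.mp hm with h' | h'
    · exact hpq1 h'
    · rcases hp.dvd_mul.mp h' with h'' | h''
      · exact hpq2 h''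
      · exact hpq1 h''
  have hPSLpos : Nat.card PSL ≠ 0 := Nat.card_pos.ne'
  have hfact : (Nat.card PSL).factorization p = r := by
    have hle : r ≤ (Nat.card PSL).factorization p :=
      (Nat.Prime.pow_dvd_iff_le_factorization hp hPSLpos).mp hUdvd
    have hlt : ¬ p ^ (r + 1) ∣ Nat.card PSL :=
      fun h => hGLval (h.trans (hPSLSL.trans hSLGL))
    have : ¬ (r + 1 ≤ (Nat.card PSL).factorization p) :=
      fun h => hlt ((Nat.Prime.pow_dvd_iff_le_factorization hp hPSLpos).mpr h)
    omega
  set S : Sylow p PSL := Sylow.ofCard U (by rw [cardU, hfact]) with hS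
  haveI : Finite (Sylow p PSL) :=
    Finite.of_injective (fun T : Sylow p PSL => T.toSubgroup)
      (fun _ _ h => Sylow.ext h)
  have e1 : P.toSubgroup ≃* U := Sylow.equiv P S
  -- characteristic of F is p
  haveI : CharP F (ringChar F) := ringChar.charP F
  obtain ⟨n, hcp, hn⟩ := FiniteField.card F (ringChar F)
  have hpc : ringChar F = p := by
    have hd : ringChar F ∣ p ^ r := by
      rw [← hqdef, ← hF, hn]; exact dvd_pow_self _ (by positivity)
    exact ((Nat.prime_dvd_prime_iff_eq hcp hp).mp (hcp.dvd_of_dvd_pow hd))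
  haveI : CharP F p := hpc ▸ ringChar.charP F
  haveI : Algebra (ZMod p) F := ZMod.algebra F p
  have hfr : Module.finrank (ZMod p) F = r := by
    have hc := Module.card_eq_pow_finrank (K := ZMod p) (V := F)
    rw [ZMod.card, hF] at hc
    exact (Nat.pow_right_injective hp.two_le hc.symm)
  have eA : F ≃+ (Fin r → ZMod p) :=
    ((Module.finBasisOfFinrankEq (ZMod p) F hfr).equivFun).toAddEquiv
  exact ⟨((e1.trans e0.symm).trans eA.toMultiplicative).trans
    (MulEquiv.piMultiplicative (fun _ : Fin r => ZMod p))⟩
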